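/- Under the same setting, for two independent benchmarks B, B' of size N, the probability that they disagree on which model has the largest sample mean is at most 2(k−1)·Φ(−Δ₁√N/(σ√2)). -/

import Mathlib

open MeasureTheory ProbabilityTheory
open scoped NNReal ENNReal

/-- The standard normal CDF `Φ(x) = P(Z ≤ x)` for `Z ~ N(0,1)`. -/
noncomputable def stdNormalCDF (x : ℝ) : ℝ := (gaussianReal 0 1 (Set.Iic x)).toReal

lemma gaussianReal_eq_map (m : ℝ) {v : ℝ≥0} (hv : (0:ℝ) < v) :
    gaussianReal m v =
      (gaussianReal 0 1).map (fun y => Real.sqrt v * y + m) := by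
  have h1 := gaussianReal_map_const_mul (μ := 0) (v := 1) (Real.sqrt v)
  have hv2 : (⟨Real.sqrt v ^ 2, sq_nonneg _⟩ : ℝ≥0) * 1 = v := by
    ext
    simp [Real.sq_sqrt (NNReal.coe_nonneg v)]
  replace h1 : (gaussianReal 0 1).map (Real.sqrt v * ·) = gaussianReal 0 v := by
    rw [h1, mul_zero]; congr 1
  have h2 := gaussianReal_map_add_const (μ := 0) (v := v) m
  rw [zero_add] at h2
  calc gaussianReal m v = ((gaussianReal 0 1).map (Real.sqrt v * ·)).map (· + m) := by
        rw [h1, h2]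
    _ = (gaussianReal 0 1).map (fun y => Real.sqrt v * y + m) := by
        rw [Measure.map_map (by fun_prop) (by fun_prop)]
        rfl

lemma gaussianReal_Iic (m x : ℝ) {v : ℝ≥0} (hv : (0:ℝ) < v) :
    gaussianReal m v (Set.Iic x) =
      gaussianReal 0 1 (Set.Iic ((x - m) / Real.sqrt v)) := by
  have hc : (0:ℝ) < Real.sqrt v := Real.sqrt_pos.2 hv
  rw [gaussianReal_eq_map m hv,
    Measure.map_apply (by fun_prop) measurableSet_Iic]
  congr 1
  ext y
  simp only [Set.mem_preimage, Set.mem_Iic]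
  rw [le_div_iff₀ hc, mul_comm]
  constructor <;> intro h <;> linarith

/-- Position-1 disagreement between two independent benchmarks of size `N`: the
probability that they disagree on which model has the largest sample mean (i.e. no
model is the strict winner on both) is at most `2(k−1)·Φ(−Δ₁√N/(σ√2))`. -/
theorem position_one_disagreement_prob
    {Ω : Type*} [MeasurableSpace Ω] (μ : Measure Ω) [IsProbabilityMeasure μ]
    (k N : ℕ) (hk : 2 ≤ k) (hN : 1 ≤ N) (σ : ℝ) (hσ : 0 < σ)
    (μs : Fin k → ℝ) (istar : Fin k)
    (hmax : ∀ j, j ≠ istar → μs j < μs istar)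
    (hne : (Finset.univ.erase istar).Nonempty)
    (Δ1 : ℝ) (hΔ1 : Δ1 = μs istar - (Finset.univ.erase istar).sup' hne μs)
    (hΔ1pos : 0 < Δ1)
    (Xbar Xbar' : Fin k → Ω → ℝ)
    (hXmeas : ∀ i, Measurable (Xbar i)) (hX'meas : ∀ i, Measurable (Xbar' i))
    (hlaw : ∀ j, j ≠ istar →
      Measure.map (fun ω => Xbar istar ω - Xbar j ω) μ =
        gaussianReal (μs istar - μs j) (Real.toNNReal (2 * σ ^ 2 / N)))
    (hlaw' : ∀ j, j ≠ istar →
      Measure.map (fun ω => Xbar' istar ω - Xbar' j ω) μ =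
        gaussianReal (μs istar - μs j) (Real.toNNReal (2 * σ ^ 2 / N)))
    (hindep : IndepFun (fun ω i => Xbar i ω) (fun ω i => Xbar' i ω) μ) :
    (μ {ω | ¬ ∃ i, (∀ j, j ≠ i → Xbar j ω < Xbar i ω) ∧
        (∀ j, j ≠ i → Xbar' j ω < Xbar' i ω)}).toReal ≤
      2 * ((k : ℝ) - 1) * stdNormalCDF (-(Δ1 * Real.sqrt N) / (σ * Real.sqrt 2)) := by
  classical
  set t : ℝ := -(Δ1 * Real.sqrt N) / (σ * Real.sqrt 2) with ht
  set G : ℝ≥0∞ := gaussianReal 0 1 (Set.Iic t) with hG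
  set v : ℝ≥0 := Real.toNNReal (2 * σ ^ 2 / N) with hv
  have hNpos : (0:ℝ) < N := by exact_mod_cast hN
  have hvr : ((v : ℝ)) = 2 * σ ^ 2 / N := by
    rw [hv, Real.coe_toNNReal]
    positivity
  have hvpos : (0:ℝ) < v := by rw [hvr]; positivity
  have hsqrtv : Real.sqrt v = σ * Real.sqrt 2 / Real.sqrt N := by
    rw [hvr]
    rw [show 2 * σ ^ 2 / N = (σ * Real.sqrt 2 / Real.sqrt N) ^ 2 by
      rw [div_pow, mul_pow, Real.sq_sqrt (by norm_num : (2:ℝ) ≥ 0),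
        Real.sq_sqrt hNpos.le]; ring]
    exact Real.sqrt_sq (by positivity)
  -- key single-event bound
  have key : ∀ (X : Fin k → Ω → ℝ), (∀ i, Measurable (X i)) →
      (∀ j, j ≠ istar →
        Measure.map (fun ω => X istar ω - X j ω) μ =
          gaussianReal (μs istar - μs j) v) →
      ∀ j ∈ Finset.univ.erase istar,
        μ {ω | X istar ω - X j ω ≤ 0} ≤ G := by
    intro X hXm hXl j hj
    have hjne : j ≠ istar := Finset.ne_of_mem_erase hj
    have hset : {ω | X istar ω - X j ω ≤ 0}
        = (fun ω => X istar ω - X j ω) ⁻¹' Set.Iic 0 := rfl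
    rw [hset, ← Measure.map_apply (by fun_prop) measurableSet_Iic, hXl j hjne,
      gaussianReal_Iic _ _ hvpos]
    refine measure_mono (Set.Iic_subset_Iic.2 ?_)
    -- (0 - (μs istar - μs j)) / √v ≤ t
    have hm : Δ1 ≤ μs istar - μs j := by
      have hsup : μs j ≤ (Finset.univ.erase istar).sup' hne μs :=
        Finset.le_sup' μs hj
      rw [hΔ1]; linarith
    have hsv : (0:ℝ) < Real.sqrt v := Real.sqrt_pos.2 hvpos
    have h1 : (0 - (μs istar - μs j)) / Real.sqrt v ≤ -Δ1 / Real.sqrt v := by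
      gcongr
      linarith
    refine h1.trans_eq ?_
    rw [hsqrtv, ht, div_div_eq_mul_div]
    rw [neg_div, neg_mul, neg_div]
  -- inclusion in the union
  set E := {ω | ¬ ∃ i, (∀ j, j ≠ i → Xbar j ω < Xbar i ω) ∧
      (∀ j, j ≠ i → Xbar' j ω < Xbar' i ω)} with hE
  have hsub : E ⊆ (⋃ j ∈ Finset.univ.erase istar, {ω | Xbar istar ω - Xbar j ω ≤ 0})
      ∪ (⋃ j ∈ Finset.univ.erase istar, {ω | Xbar' istar ω - Xbar' j ω ≤ 0}) := by
    intro ω hω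
    by_contra hcon
    simp only [Set.mem_union, Set.mem_iUnion, Set.mem_setOf_eq, not_or, not_exists,
      not_le] at hcon
    obtain ⟨h1, h2⟩ := hcon
    apply hω
    refine ⟨istar, fun j hj => ?_, fun j hj => ?_⟩
    · have := h1 j (Finset.mem_erase.2 ⟨hj, Finset.mem_univ j⟩); linarith
    · have := h2 j (Finset.mem_erase.2 ⟨hj, Finset.mem_univ j⟩); linarith
  have hcard : (Finset.univ.erase istar).card = k - 1 := by
    rw [Finset.card_erase_of_mem (Finset.mem_univ istar), Finset.card_univ, Fintype.card_fin]
  have hbound : μ E ≤ ((k - 1 : ℕ) : ℝ≥0∞) * G + ((k - 1 : ℕ) : ℝ≥0∞) * G := by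
    refine (measure_mono hsub).trans ?_
    refine (measure_union_le _ _).trans ?_
    gcongr
    · refine (measure_biUnion_finset_le _ _).trans ?_
      calc ∑ j ∈ Finset.univ.erase istar, μ {ω | Xbar istar ω - Xbar j ω ≤ 0}
          ≤ ∑ _j ∈ Finset.univ.erase istar, G :=
            Finset.sum_le_sum (key Xbar hXmeas (fun j hj => hlaw j hj))
        _ = ((k - 1 : ℕ) : ℝ≥0∞) * G := by rw [Finset.sum_const, hcard, nsmul_eq_mul]
    · refine (measure_biUnion_finset_le _ _).trans ?_
      calc ∑ j ∈ Finset.univ.erase istar, μ {ω | Xbar' istar ω - Xbar' j ω ≤ 0}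
          ≤ ∑ _j ∈ Finset.univ.erase istar, G :=
            Finset.sum_le_sum (key Xbar' hX'meas (fun j hj => hlaw' j hj))
        _ = ((k - 1 : ℕ) : ℝ≥0∞) * G := by rw [Finset.sum_const, hcard, nsmul_eq_mul]
  have hGfin : G ≠ ⊤ := (measure_lt_top _ _).ne
  have hfin : ((k - 1 : ℕ) : ℝ≥0∞) * G + ((k - 1 : ℕ) : ℝ≥0∞) * G ≠ ⊤ := by
    finiteness
  have := ENNReal.toReal_mono hfin hbound
  refine this.trans ?_
  rw [ENNReal.toReal_add (by finiteness) (by finiteness),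
    ENNReal.toReal_mul, ENNReal.toReal_natCast]
  have hk1 : ((k - 1 : ℕ) : ℝ) = (k : ℝ) - 1 := by
    have : 1 ≤ k := le_trans (by norm_num) hk
    push_cast [this]; ring
  rw [hk1]
  have : G.toReal = stdNormalCDF t := rfl
  rw [this]
  have hΦ : 0 ≤ stdNormalCDF t := ENNReal.toReal_nonneg
  nlinarith [hΦ, (show (2:ℝ) ≤ k by exact_mod_cast hk)]
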